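/- Let Q be an α-covering of ℝ^n (0 ≤ α ≤ 1) and R > 0. Then there exists a constant n_0' such that for every Q ∈ Q, the number of Q' ∈ Q with (Q + B(0,R)) ∩ Q' ≠ ∅ is at most n_0'. -/

import Mathlib

open MeasureTheory Metric Complex Function Pointwise
noncomputable section
abbrev Eu (n : ℕ) := EuclideanSpace ℝ (Fin n)
noncomputable def jb {n : ℕ} (ξ : Eu n) : ℝ := Real.sqrt (1 + ‖ξ‖^2)
noncomputable def FT {n : ℕ} (f : Eu n → ℂ) (ξ : Eu n) : ℂ :=
  ∫ x, Complex.exp (-(Complex.I * ((inner ℝ ξ x : ℝ) : ℂ))) * f x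
noncomputable def invFT {n : ℕ} (f : Eu n → ℂ) (x : Eu n) : ℂ :=
  ((2 * Real.pi) ^ n : ℝ)⁻¹ * ∫ ξ, Complex.exp (Complex.I * ((inner ℝ x ξ : ℝ) : ℂ)) * f ξ
noncomputable def pdo {n : ℕ} (σ : Eu n → Eu n → ℂ) (f : Eu n → ℂ) (x : Eu n) : ℂ :=
  ((2 * Real.pi) ^ n : ℝ)⁻¹ * ∫ ξ, Complex.exp (Complex.I * ((inner ℝ x ξ : ℝ) : ℂ)) * σ x ξ * FT f ξ
def IsAlphaCovering {n : ℕ} (α : ℝ) {ι : Type} (Q : ι → Set (Eu n)) : Prop :=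
  (∀ ξ, ∃ i, ξ ∈ Q i) ∧
  (∃ n₀ : ℕ, ∀ i, {j | (Q i ∩ Q j).Nonempty}.Finite ∧ Nat.card {j | (Q i ∩ Q j).Nonempty} ≤ n₀) ∧
  (∃ C : ℝ, 0 < C ∧ ∀ i, ∀ ξ ∈ Q i,
     ENNReal.ofReal (C⁻¹ * jb ξ ^ (α * n)) ≤ volume (Q i) ∧
     volume (Q i) ≤ ENNReal.ofReal (C * jb ξ ^ (α * n))) ∧
  (∃ K : ℝ, 1 ≤ K ∧ ∀ i, ∃ c r c' R, 0 < r ∧ ball c r ⊆ Q i ∧ Q i ⊆ ball c' R ∧ R ≤ K * r)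

lemma one_le_jb {n : ℕ} (x : Eu n) : 1 ≤ jb x := by
  have h : Real.sqrt 1 ≤ Real.sqrt (1 + ‖x‖^2) := Real.sqrt_le_sqrt (by nlinarith [sq_nonneg ‖x‖])
  calc (1:ℝ) = Real.sqrt 1 := Real.sqrt_one.symm
  _ ≤ Real.sqrt (1 + ‖x‖^2) := h

lemma jb_nonneg {n : ℕ} (x : Eu n) : 0 ≤ jb x := Real.sqrt_nonneg _

lemma jb_rpow_le {n : ℕ} {α R : ℝ} (hα0 : 0 ≤ α) (hα1 : α ≤ 1) (hR : 0 < R)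
    (x y : Eu n) (h : ‖x‖ ≤ ‖y‖ + R) :
    jb x ^ (α * n) ≤ (1+R)^n * jb y ^ (α * n) := by
  have hy : (0:ℝ) ≤ ‖y‖ := norm_nonneg y
  have hαn : 0 ≤ α * n := mul_nonneg hα0 (Nat.cast_nonneg n)
  have h1 : jb x ≤ (1+R) * jb y := by
    unfold jb
    rw [show (1+R) * Real.sqrt (1 + ‖y‖^2) = Real.sqrt ((1+R)^2 * (1+‖y‖^2)) by
      rw [Real.sqrt_mul (by positivity), Real.sqrt_sq (by positivity)]]
    apply Real.sqrt_le_sqrt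
    have hx2 : ‖x‖^2 ≤ (‖y‖+R)^2 := pow_le_pow_left₀ (norm_nonneg x) h 2
    nlinarith [mul_nonneg hR.le (sq_nonneg (‖y‖-1)), mul_nonneg (mul_nonneg hR.le hR.le) (sq_nonneg ‖y‖)]
  have h2 : jb x ^ (α*(n:ℝ)) ≤ ((1+R) * jb y) ^ (α*(n:ℝ)) :=
    Real.rpow_le_rpow (jb_nonneg x) h1 hαn
  rw [Real.mul_rpow (by linarith) (jb_nonneg y)] at h2
  refine h2.trans (mul_le_mul_of_nonneg_right ?_ (Real.rpow_nonneg (jb_nonneg y) _))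
  calc (1+R) ^ (α * (n:ℝ)) ≤ (1+R) ^ ((n:ℝ)) :=
        Real.rpow_le_rpow_of_exponent_le (by linarith) (by nlinarith [Nat.cast_nonneg (α := ℝ) n])
  _ = (1+R)^n := Real.rpow_natCast _ n

lemma sum_measure_le_mul {X : Type*} [MeasurableSpace X] (μ : Measure X)
    {ι : Type*} (T : Finset ι) (A : ι → Set X) (hA : ∀ j ∈ T, MeasurableSet (A j))
    (U : Set X) (hU : MeasurableSet U) (hsub : ∀ j ∈ T, A j ⊆ U) (N : ℕ)
    (hmult : ∀ x : X, ∀ s : Finset ι, s ⊆ T → (∀ j ∈ s, x ∈ A j) → s.card ≤ N) :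
    ∑ j ∈ T, μ (A j) ≤ (N : ENNReal) * μ U := by
  classical
  have h1 : ∑ j ∈ T, μ (A j) = ∫⁻ x, ∑ j ∈ T, (A j).indicator (fun _ => (1:ENNReal)) x ∂μ := by
    rw [lintegral_finset_sum T (f := fun j => (A j).indicator (fun _ => (1:ENNReal)))
      (fun j hj => (measurable_one).indicator (hA j hj))]
    refine (Finset.sum_congr rfl fun j hj => ?_).symm
    rw [lintegral_indicator (hA j hj), setLIntegral_one]
  have h2 : ∀ x, ∑ j ∈ T, (A j).indicator (fun _ => (1:ENNReal)) x
      ≤ U.indicator (fun _ => (N:ENNReal)) x := by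
    intro x
    by_cases hx : x ∈ U
    · have he : ∑ j ∈ T, (A j).indicator (fun _ => (1:ENNReal)) x
          = ((T.filter (fun j => x ∈ A j)).card : ENNReal) := by
        rw [← Finset.sum_boole]
        refine Finset.sum_congr rfl fun j _ => ?_
        by_cases h : x ∈ A j <;> simp [Set.indicator, h]
      rw [he, Set.indicator_of_mem hx]
      exact Nat.cast_le.mpr (hmult x _ (Finset.filter_subset _ _)
        (fun j hj => (Finset.mem_filter.mp hj).2))
    · have hz : ∀ j ∈ T, (A j).indicator (fun _ => (1:ENNReal)) x = 0 := fun j hj =>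
        Set.indicator_of_notMem (fun h => hx (hsub j hj h)) _
      rw [Finset.sum_eq_zero hz, Set.indicator_of_notMem hx]
  calc ∑ j ∈ T, μ (A j) = ∫⁻ x, ∑ j ∈ T, (A j).indicator (fun _ => (1:ENNReal)) x ∂μ := h1
  _ ≤ ∫⁻ x, U.indicator (fun _ => (N:ENNReal)) x ∂μ := lintegral_mono h2
  _ = N * μ U := by rw [lintegral_indicator hU, setLIntegral_const]

set_option maxHeartbeats 1000000 in
theorem stmt4 (n : ℕ) (α : ℝ) (hα0 : 0 ≤ α) (hα1 : α ≤ 1)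
    (ι : Type) [Countable ι] (Q : ι → Set (Eu n))
    (hQ : IsAlphaCovering α Q) (R : ℝ) (hR : 0 < R) :
    ∃ n₀' : ℕ, ∀ i, {j | ((Q i + ball (0 : Eu n) R) ∩ Q j).Nonempty}.Finite ∧
      Nat.card {j | ((Q i + ball (0 : Eu n) R) ∩ Q j).Nonempty} ≤ n₀' := by
  classical
  obtain ⟨hcov, ⟨n₀, hn₀⟩, ⟨C₀, hC₀, hC₀'⟩, ⟨K, hK, hball⟩⟩ := hQ
  choose cc rr cc' RR hrr hbrr hQrr hRK using hball
  have hKpos : (0:ℝ) < K := lt_of_lt_of_le one_pos hK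
  rcases Nat.eq_zero_or_pos n with hn | hn
  · -- degenerate case n = 0 : the space is a single point
    subst hn
    refine ⟨n₀, fun i => ?_⟩
    have hsub : {j | ((Q i + ball (0:Eu 0) R) ∩ Q j).Nonempty} ⊆ {j | (Q i ∩ Q j).Nonempty} := by
      intro j hj
      obtain ⟨x, -, hx2⟩ := hj
      have hc : cc i ∈ Q i := hbrr i (mem_ball_self (hrr i))
      have hS : Subsingleton (Eu 0) := inferInstance
      refine ⟨x, ?_, hx2⟩
      rw [Subsingleton.elim x (cc i)]
      exact hc
    exact ⟨(hn₀ i).1.subset hsub, le_trans (Nat.card_mono (hn₀ i).1 hsub) (hn₀ i).2⟩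
  -- main case n ≥ 1
  have hnt : Nontrivial (Eu n) :=
    Module.nontrivial_of_finrank_pos (R := ℝ)
      (by rw [finrank_euclideanSpace_fin]; omega : 0 < Module.finrank ℝ (Eu n))
  -- volume of balls
  have hμpos : 0 < volume (ball (0:Eu n) 1) := measure_ball_pos _ _ one_pos
  have hμtop : volume (ball (0:Eu n) 1) ≠ ⊤ := measure_ball_lt_top.ne
  set u := (volume (ball (0 : Eu n) 1)).toReal with hu
  have hupos : 0 < u := ENNReal.toReal_pos hμpos.ne' hμtop
  have hμeq : volume (ball (0:Eu n) 1) = ENNReal.ofReal u := (ENNReal.ofReal_toReal hμtop).symm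
  have hvb : ∀ (x : Eu n) (s : ℝ), 0 ≤ s → volume (ball x s) = ENNReal.ofReal (s^n * u) := by
    intro x s hs
    rw [Measure.addHaar_ball _ _ hs, finrank_euclideanSpace_fin, hμeq,
      ← ENNReal.ofReal_mul (pow_nonneg hs n)]
  -- normalized constant C ≥ 1
  set C := max C₀ 1 with hCdef
  have hC1 : (1:ℝ) ≤ C := le_max_right _ _
  have hCpos : (0:ℝ) < C := lt_of_lt_of_le one_pos hC1
  have hC : ∀ i, ∀ ξ ∈ Q i, ENNReal.ofReal (C⁻¹ * jb ξ ^ (α * n)) ≤ volume (Q i) ∧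
      volume (Q i) ≤ ENNReal.ofReal (C * jb ξ ^ (α * n)) := by
    intro i ξ hξ
    have hjb : (0:ℝ) ≤ jb ξ ^ (α * n) := Real.rpow_nonneg (jb_nonneg ξ) _
    refine ⟨le_trans (ENNReal.ofReal_le_ofReal ?_) (hC₀' i ξ hξ).1,
      le_trans (hC₀' i ξ hξ).2 (ENNReal.ofReal_le_ofReal ?_)⟩
    · exact mul_le_mul_of_nonneg_right (inv_anti₀ hC₀ (le_max_left _ _)) hjb
    · exact mul_le_mul_of_nonneg_right (le_max_left _ _) hjb
  have hαn : 0 ≤ α * n := mul_nonneg hα0 (Nat.cast_nonneg n)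
  -- constants
  set M := C^2 * (1+R)^n with hMdef
  have h1Rn : (1:ℝ) ≤ (1+R)^n := one_le_pow₀ (by linarith)
  have hM1 : (1:ℝ) ≤ M := by nlinarith
  have hMpos : (0:ℝ) < M := lt_of_lt_of_le one_pos hM1
  set ρ := (C * u * K^n)⁻¹ with hρdef
  have hρpos : (0:ℝ) < ρ := by
    rw [hρdef]
    exact inv_pos.mpr (mul_pos (mul_pos hCpos hupos) (pow_pos hKpos n))
  set A₁ := (1 + 2*K*M)*K with hA₁def
  have hA₁pos : (0:ℝ) < A₁ := by
    rw [hA₁def]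
    exact mul_pos (by nlinarith [mul_pos hKpos hMpos]) hKpos
  set B := 2^n * (A₁^n + R^n / ρ) with hBdef
  have hBpos : (0:ℝ) < B :=
    mul_pos (pow_pos two_pos n) (add_pos (pow_pos hA₁pos n) (div_pos (pow_pos hR n) hρpos))
  set Z := K^n * M * n₀ * B with hZdef
  refine ⟨⌈Z⌉₊, fun i => ?_⟩
  -- data for Q i
  have hRRpos : ∀ j, (0:ℝ) < RR j := fun j =>
    lt_of_le_of_lt dist_nonneg (mem_ball.mp (hQrr j (hbrr j (mem_ball_self (hrr j)))))
  have hci : cc i ∈ Q i := hbrr i (mem_ball_self (hrr i))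
  have hQi_lb : ENNReal.ofReal (rr i^n * u) ≤ volume (Q i) := by
    rw [← hvb (cc i) (rr i) (hrr i).le]; exact measure_mono (hbrr i)
  have hQi_ub : volume (Q i) ≤ ENNReal.ofReal (RR i^n * u) := by
    rw [← hvb (cc' i) (RR i) (hRRpos i).le]; exact measure_mono (hQrr i)
  have hCinv_le : ENNReal.ofReal C⁻¹ ≤ volume (Q i) := by
    refine le_trans (ENNReal.ofReal_le_ofReal ?_) (hC i (cc i) hci).1
    have h1 : (1:ℝ) ≤ jb (cc i) ^ (α*(n:ℝ)) := Real.one_le_rpow (one_le_jb _) hαn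
    nlinarith [inv_pos.mpr hCpos]
  -- lower bound on the inner radius of Q i
  have hrn : ρ ≤ rr i^n := by
    have h1 : C⁻¹ ≤ RR i^n * u := by
      rw [← ENNReal.ofReal_le_ofReal_iff (mul_nonneg (pow_nonneg (hRRpos i).le n) hupos.le)]
      exact hCinv_le.trans hQi_ub
    have h2 : RR i^n ≤ K^n * rr i^n := by
      calc RR i^n ≤ (K*rr i)^n := pow_le_pow_left₀ (hRRpos i).le (hRK i) n
      _ = K^n * rr i^n := mul_pow K (rr i) n
    have h4 : C⁻¹ ≤ rr i^n * (u * K^n) := by nlinarith [hupos.le, pow_pos hKpos n]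
    have h5 : ρ = C⁻¹ * (u * K^n)⁻¹ := by rw [hρdef, mul_inv, mul_inv]; ring
    have huK : (0:ℝ) < u * K^n := mul_pos hupos (pow_pos hKpos n)
    rw [h5]
    calc C⁻¹ * (u*K^n)⁻¹ ≤ (rr i^n * (u*K^n)) * (u*K^n)⁻¹ :=
          mul_le_mul_of_nonneg_right h4 (inv_nonneg.mpr huK.le)
    _ = rr i^n := mul_inv_cancel_right₀ huK.ne' _
  set D := (1 + 2*K*M) * RR i + R with hDdef
  have hDpos : (0:ℝ) < D := by nlinarith [hRRpos i]
  -- key per-index facts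
  have key : ∀ j, ((Q i + ball (0:Eu n) R) ∩ Q j).Nonempty →
      (Q j ⊆ ball (cc' i) D ∧
       ENNReal.ofReal (rr i ^ n * u) ≤ ENNReal.ofReal (K^n * M) * volume (ball (cc j) (rr j))) := by
    intro j hj
    obtain ⟨ξ, hξ1, hξ2⟩ := hj
    obtain ⟨η, hη, b, hb, hηb⟩ := Set.mem_add.mp hξ1
    have hbR : ‖b‖ < R := mem_ball_zero_iff.mp hb
    have hxy : ‖ξ‖ ≤ ‖η‖ + R := by
      calc ‖ξ‖ = ‖η + b‖ := by rw [hηb]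
      _ ≤ ‖η‖ + ‖b‖ := norm_add_le _ _
      _ ≤ ‖η‖ + R := by linarith
    have hyx : ‖η‖ ≤ ‖ξ‖ + R := by
      have hb2 : η = ξ - b := by rw [← hηb]; abel
      rw [hb2]
      calc ‖ξ - b‖ ≤ ‖ξ‖ + ‖b‖ := norm_sub_le _ _
      _ ≤ ‖ξ‖ + R := by linarith
    have hCne : C ≠ 0 := hCpos.ne'
    -- volume comparability in both directions
    have hQj_ub : volume (Q j) ≤ ENNReal.ofReal M * volume (Q i) := by
      calc volume (Q j) ≤ ENNReal.ofReal (C * jb ξ ^ (α*(n:ℝ))) := (hC j ξ hξ2).2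
      _ ≤ ENNReal.ofReal (C * ((1+R)^n * jb η ^ (α*(n:ℝ)))) := ENNReal.ofReal_le_ofReal (by
          have := jb_rpow_le hα0 hα1 hR ξ η hxy
          nlinarith)
      _ = ENNReal.ofReal (M * (C⁻¹ * jb η ^(α*(n:ℝ)))) := by
          congr 1; rw [hMdef]; field_simp
      _ = ENNReal.ofReal M * ENNReal.ofReal (C⁻¹ * jb η ^(α*(n:ℝ))) := ENNReal.ofReal_mul hMpos.le
      _ ≤ ENNReal.ofReal M * volume (Q i) := mul_le_mul_right (hC i η hη).1 _
    have hQi_ub2 : volume (Q i) ≤ ENNReal.ofReal M * volume (Q j) := by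
      calc volume (Q i) ≤ ENNReal.ofReal (C * jb η ^ (α*(n:ℝ))) := (hC i η hη).2
      _ ≤ ENNReal.ofReal (C * ((1+R)^n * jb ξ ^ (α*(n:ℝ)))) := ENNReal.ofReal_le_ofReal (by
          have := jb_rpow_le hα0 hα1 hR η ξ hyx
          nlinarith)
      _ = ENNReal.ofReal (M * (C⁻¹ * jb ξ ^(α*(n:ℝ)))) := by
          congr 1; rw [hMdef]; field_simp
      _ = ENNReal.ofReal M * ENNReal.ofReal (C⁻¹ * jb ξ ^(α*(n:ℝ))) := ENNReal.ofReal_mul hMpos.le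
      _ ≤ ENNReal.ofReal M * volume (Q j) := mul_le_mul_right (hC j ξ hξ2).1 _
    -- the inner radius of Q j is controlled
    have hrj_ub : rr j ≤ M * RR i := by
      have h1 : ENNReal.ofReal (rr j ^n * u) ≤ ENNReal.ofReal (M * (RR i ^n * u)) := by
        calc ENNReal.ofReal (rr j^n*u) = volume (ball (cc j) (rr j)) := (hvb _ _ (hrr j).le).symm
        _ ≤ volume (Q j) := measure_mono (hbrr j)
        _ ≤ ENNReal.ofReal M * volume (Q i) := hQj_ub
        _ ≤ ENNReal.ofReal M * ENNReal.ofReal (RR i^n * u) := mul_le_mul_right hQi_ub _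
        _ = ENNReal.ofReal (M * (RR i^n*u)) := (ENNReal.ofReal_mul hMpos.le).symm
      have h2 : rr j ^n * u ≤ M * (RR i^n*u) :=
        (ENNReal.ofReal_le_ofReal_iff
          (mul_nonneg hMpos.le (mul_nonneg (pow_nonneg (hRRpos i).le n) hupos.le))).mp h1
      rw [show M * (RR i^n*u) = M * RR i^n * u by ring] at h2
      have h3' : rr j^n ≤ M * RR i^n := le_of_mul_le_mul_right h2 hupos
      have h4 : rr j^n ≤ (M * RR i)^n := by
        rw [mul_pow]
        have hMn : M ≤ M^n := le_self_pow₀ hM1 (by omega)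
        nlinarith [pow_pos (hRRpos i) n]
      exact (pow_le_pow_iff_left₀ (hrr j).le (mul_nonneg hMpos.le (hRRpos i).le) (by omega)).mp h4
    -- Q j lies in the big ball
    have hd1 : dist ξ (cc' i) < R + RR i := by
      have h1 : dist η (cc' i) < RR i := mem_ball.mp (hQrr i hη)
      have h2 : dist ξ η = ‖b‖ := by rw [← hηb, dist_eq_norm, add_sub_cancel_left]
      calc dist ξ (cc' i) ≤ dist ξ η + dist η (cc' i) := dist_triangle _ _ _
      _ < R + RR i := by rw [h2]; linarith
    have hsubD : Q j ⊆ ball (cc' i) D := by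
      intro y hy
      have h1 : dist y (cc' j) < RR j := mem_ball.mp (hQrr j hy)
      have h2 : dist ξ (cc' j) < RR j := mem_ball.mp (hQrr j hξ2)
      have h3 : RR j ≤ K * (M * RR i) :=
        le_trans (hRK j) (mul_le_mul_of_nonneg_left hrj_ub hKpos.le)
      rw [mem_ball]
      calc dist y (cc' i) ≤ dist y (cc' j) + dist (cc' j) ξ + dist ξ (cc' i) :=
            dist_triangle4 _ _ _ _
      _ < RR j + RR j + (R + RR i) := by rw [dist_comm (cc' j) ξ]; linarith
      _ ≤ (1 + 2*K*M)*RR i + R := by nlinarith [hRRpos i]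
      _ = D := hDdef.symm
    -- lower bound for the ball inside Q j
    have hQjball : volume (Q j) ≤ ENNReal.ofReal (K^n) * volume (ball (cc j) (rr j)) := by
      calc volume (Q j) ≤ volume (ball (cc' j) (RR j)) := measure_mono (hQrr j)
      _ = ENNReal.ofReal (RR j^n * u) := hvb _ _ (hRRpos j).le
      _ ≤ ENNReal.ofReal (K^n * (rr j^n * u)) := ENNReal.ofReal_le_ofReal (by
          have h5 : RR j^n ≤ (K * rr j)^n := pow_le_pow_left₀ (hRRpos j).le (hRK j) n
          rw [mul_pow] at h5
          nlinarith [hupos.le, pow_nonneg (hrr j).le n, pow_pos hKpos n])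
      _ = ENNReal.ofReal (K^n) * ENNReal.ofReal (rr j^n * u) :=
          ENNReal.ofReal_mul (pow_nonneg hKpos.le n)
      _ = ENNReal.ofReal (K^n) * volume (ball (cc j) (rr j)) := by rw [hvb _ _ (hrr j).le]
    have hlow : ENNReal.ofReal (rr i^n * u)
        ≤ ENNReal.ofReal (K^n * M) * volume (ball (cc j) (rr j)) := by
      calc ENNReal.ofReal (rr i^n*u) ≤ volume (Q i) := hQi_lb
      _ ≤ ENNReal.ofReal M * volume (Q j) := hQi_ub2
      _ ≤ ENNReal.ofReal M * (ENNReal.ofReal (K^n) * volume (ball (cc j) (rr j))) :=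
          mul_le_mul_right hQjball _
      _ = ENNReal.ofReal (K^n * M) * volume (ball (cc j) (rr j)) := by
          rw [← mul_assoc, ← ENNReal.ofReal_mul hMpos.le, mul_comm M (K^n)]
    exact ⟨hsubD, hlow⟩
  -- the D^n bound
  have hDn : D^n ≤ B * rr i^n := by
    have h1 : D ≤ A₁ * rr i + R := by
      have h0 : RR i ≤ K * rr i := hRK i
      rw [hDdef, hA₁def]
      nlinarith [hrr i]
    have h2 : D^n ≤ (A₁*rr i + R)^n := pow_le_pow_left₀ hDpos.le h1 n
    have h3 : (A₁*rr i + R)^n ≤ 2^(n-1) * ((A₁*rr i)^n + R^n) :=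
      add_pow_le (mul_nonneg hA₁pos.le (hrr i).le) hR.le n
    have h4 : R^n ≤ (R^n/ρ) * rr i^n := by
      calc R^n = (R^n/ρ)*ρ := by field_simp
      _ ≤ (R^n/ρ)*rr i^n :=
          mul_le_mul_of_nonneg_left hrn (div_nonneg (pow_nonneg hR.le n) hρpos.le)
    have h2n : (2:ℝ)^(n-1) ≤ 2^n := pow_le_pow_right₀ one_le_two (Nat.sub_le n 1)
    have h5 : 2^(n-1)*((A₁*rr i)^n + R^n) ≤ 2^n*((A₁*rr i)^n + (R^n/ρ)*rr i^n) := by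
      apply mul_le_mul h2n (add_le_add_right h4 _)
        (add_nonneg (pow_nonneg (mul_nonneg hA₁pos.le (hrr i).le) n) (pow_nonneg hR.le n))
        (pow_nonneg two_pos.le n)
    calc D^n ≤ 2^(n-1) * ((A₁*rr i)^n + R^n) := h2.trans h3
    _ ≤ 2^n*((A₁*rr i)^n + (R^n/ρ)*rr i^n) := h5
    _ = B * rr i^n := by rw [hBdef, mul_pow]; ring
  -- counting
  have hcard : ∀ T : Finset ι, (↑T ⊆ {j | ((Q i + ball (0:Eu n) R) ∩ Q j).Nonempty}) →
      T.card ≤ ⌈Z⌉₊ := by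
    intro T hT
    have hmult : ∀ x : Eu n, ∀ s : Finset ι, s ⊆ T →
        (∀ j ∈ s, x ∈ ball (cc j) (rr j)) → s.card ≤ n₀ := by
      intro x s hs hxs
      rcases s.eq_empty_or_nonempty with he | ⟨j₀, hj₀⟩
      · simp [he]
      · have hxQ : x ∈ Q j₀ := hbrr j₀ (hxs j₀ hj₀)
        have hfin := (hn₀ j₀).1
        have hsubs : s ⊆ hfin.toFinset := by
          intro j hj
          rw [Set.Finite.mem_toFinset]
          exact ⟨x, hxQ, hbrr j (hxs j hj)⟩
        calc s.card ≤ hfin.toFinset.card := Finset.card_le_card hsubs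
        _ = Nat.card {j | (Q j₀ ∩ Q j).Nonempty} := by
            rw [Nat.card_coe_set_eq, Set.ncard_eq_toFinset_card _ hfin]
        _ ≤ n₀ := (hn₀ j₀).2
    have hsum : ∑ j ∈ T, volume (ball (cc j) (rr j)) ≤ (n₀ : ENNReal) * volume (ball (cc' i) D) :=
      sum_measure_le_mul volume T _ (fun j _ => measurableSet_ball) _ measurableSet_ball
        (fun j hj => (hbrr j).trans ((key j (hT hj)).1)) n₀ hmult
    have hXne : ENNReal.ofReal (rr i^n * u) ≠ 0 :=
      (ENNReal.ofReal_pos.mpr (mul_pos (pow_pos (hrr i) n) hupos)).ne'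
    have hZnn : (0:ℝ) ≤ Z := by
      rw [hZdef]
      exact mul_nonneg (mul_nonneg (mul_nonneg (pow_nonneg hKpos.le n) hMpos.le)
        (Nat.cast_nonneg n₀)) hBpos.le
    have hmain : (T.card : ENNReal) * ENNReal.ofReal (rr i^n * u)
        ≤ ENNReal.ofReal Z * ENNReal.ofReal (rr i^n * u) := by
      calc (T.card : ENNReal) * ENNReal.ofReal (rr i^n*u)
          = ∑ _j ∈ T, ENNReal.ofReal (rr i^n*u) := by
            rw [Finset.sum_const, nsmul_eq_mul]
      _ ≤ ∑ j ∈ T, ENNReal.ofReal (K^n*M) * volume (ball (cc j) (rr j)) :=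
            Finset.sum_le_sum (fun j hj => (key j (hT hj)).2)
      _ = ENNReal.ofReal (K^n*M) * ∑ j ∈ T, volume (ball (cc j) (rr j)) := by
            rw [Finset.mul_sum]
      _ ≤ ENNReal.ofReal (K^n*M) * ((n₀:ENNReal) * volume (ball (cc' i) D)) :=
            mul_le_mul_right hsum _
      _ = ENNReal.ofReal (K^n*M) * ((n₀:ENNReal) * ENNReal.ofReal (D^n * u)) := by
            rw [hvb _ _ hDpos.le]
      _ ≤ ENNReal.ofReal (K^n*M) * ((n₀:ENNReal) * ENNReal.ofReal ((B*rr i^n) * u)) := by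
            refine mul_le_mul_right (mul_le_mul_right (ENNReal.ofReal_le_ofReal ?_) _) _
            exact mul_le_mul_of_nonneg_right hDn hupos.le
      _ = ENNReal.ofReal Z * ENNReal.ofReal (rr i^n * u) := by
            rw [← ENNReal.ofReal_natCast n₀,
              ← ENNReal.ofReal_mul (show (0:ℝ) ≤ (n₀:ℝ) from Nat.cast_nonneg n₀),
              ← ENNReal.ofReal_mul (mul_nonneg (pow_nonneg hKpos.le n) hMpos.le),
              ← ENNReal.ofReal_mul hZnn]
            congr 1
            rw [hZdef]
            ring
    have hle : (T.card : ENNReal) ≤ ENNReal.ofReal Z :=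
      (ENNReal.mul_le_mul_iff_left hXne ENNReal.ofReal_ne_top).mp hmain
    have hfin : (T.card : ENNReal) ≤ (⌈Z⌉₊ : ENNReal) :=
      hle.trans (by rw [← ENNReal.ofReal_natCast]; exact ENNReal.ofReal_le_ofReal (Nat.le_ceil Z))
    exact_mod_cast hfin
  have hSfin : {j | ((Q i + ball (0:Eu n) R) ∩ Q j).Nonempty}.Finite := by
    by_contra h
    obtain ⟨T, hT, hTcard⟩ := Set.Infinite.exists_subset_card_eq h (⌈Z⌉₊+1)
    have := hcard T hT
    omega
  refine ⟨hSfin, ?_⟩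
  rw [Nat.card_coe_set_eq, Set.ncard_eq_toFinset_card _ hSfin]
  exact hcard hSfin.toFinset (by rw [Set.Finite.coe_toFinset])
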